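/- Let (f_n) be the integer sequence defined by f_0 = 0, f_1 = 1 and f_n = Σ_{i=1}^{n−1} (2^i C_i − f_i) f_{n−i} for n ≥ 2, where C_i = (1/i)·binomial(2i−2, i−1). Then for every real x with 0 ≤ x < 1/8, the series F(x) = Σ_{n≥1} f_n x^n converges and satisfies the quadratic equation 2·F(x)² + F(x)·(1 + √(1 − 8x)) − 2x = 0. -/

import Mathlib

/-- The Catalan number `C n = (1/n) * binomial (2n-2) (n-1)` (the division is exact;
`C 0 = 0`). -/
def catalanC (n : ℕ) : ℕ := (2 * n - 2).choose (n - 1) / n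

open Finset

/-- The majorant sequence `a n = 2^n * C n`. -/
def aaSeq (n : ℕ) : ℕ := 2 ^ n * catalanC n

lemma catalanC_zero : catalanC 0 = 0 := by simp [catalanC]

lemma catalanC_succ (n : ℕ) : catalanC (n + 1) = catalan n := by
  have h : 2 * (n + 1) - 2 = 2 * n := by omega
  rw [catalanC, h, Nat.add_sub_cancel, catalan_eq_centralBinom_div, Nat.centralBinom]

lemma aaSeq_zero : aaSeq 0 = 0 := by simp [aaSeq, catalanC_zero]

lemma aaSeq_one : aaSeq 1 = 2 := by
  simp [aaSeq, catalanC_succ]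

lemma choose_le_two_pow_aux (n k : ℕ) : n.choose k ≤ 2 ^ n := by
  rcases le_or_gt k n with h | h
  · calc n.choose k ≤ ∑ i ∈ range (n + 1), n.choose i :=
        Finset.single_le_sum (fun i _ => Nat.zero_le _) (by simp [Nat.lt_succ_of_le h])
      _ = 2 ^ n := Nat.sum_range_choose n
  · simp [Nat.choose_eq_zero_of_lt h]

lemma aaSeq_le (n : ℕ) : aaSeq n ≤ 8 ^ n := by
  cases n with
  | zero => simp [aaSeq_zero]
  | succ m =>
    have h1 : catalan m ≤ Nat.centralBinom m :=
      le_trans (Nat.le_mul_of_pos_left _ (Nat.succ_pos m))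
        (le_of_eq (succ_mul_catalan_eq_centralBinom m))
    have h2 : Nat.centralBinom m ≤ 2 ^ (2 * m) := choose_le_two_pow_aux (2 * m) m
    have : aaSeq (m + 1) = 2 ^ (m + 1) * catalan m := by rw [aaSeq, catalanC_succ]
    calc aaSeq (m + 1) = 2 ^ (m + 1) * catalan m := this
      _ ≤ 2 ^ (m + 1) * 2 ^ (2 * m) := Nat.mul_le_mul_left _ (le_trans h1 h2)
      _ ≤ 8 ^ (m + 1) := by
          rw [← pow_add]
          calc (2:ℕ) ^ (m + 1 + 2 * m) ≤ 2 ^ (3 * (m + 1)) :=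
              Nat.pow_le_pow_right (by norm_num) (by omega)
            _ = 8 ^ (m + 1) := by rw [pow_mul]; norm_num
  
/-- Catalan-type convolution for `aaSeq`. -/
lemma aaSeq_conv (n : ℕ) (hn : 2 ≤ n) :
    aaSeq n = ∑ i ∈ Finset.Icc 1 (n - 1), aaSeq i * aaSeq (n - i) := by
  obtain ⟨m, rfl⟩ : ∃ m, n = m + 2 := ⟨n - 2, by omega⟩
  have hcat : catalan (m + 1) = ∑ j ∈ range (m + 1), catalan j * catalan (m - j) := by
    rw [catalan_succ']
    rw [Finset.Nat.sum_antidiagonal_eq_sum_range_succ_mk]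
  have hred : m + 2 - 1 = m + 1 := by omega
  have hIcc : Finset.Icc 1 (m + 1) = Finset.Ico 1 (m + 2) := by
    ext i; simp [Nat.lt_succ_iff]
  rw [hred, hIcc, Finset.sum_Ico_eq_sum_range]
  have hred2 : m + 2 - 1 = m + 1 := by omega
  rw [hred2]
  have : ∀ j ∈ range (m + 1), aaSeq (1 + j) * aaSeq (m + 2 - (1 + j)) =
      2 ^ (m + 2) * (catalan j * catalan (m - j)) := by
    intro j hj
    have hjm : j ≤ m := by simpa [Nat.lt_succ_iff] using hj
    have e1 : (1 : ℕ) + j = j + 1 := by omega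
    rw [e1]
    have e2 : m + 2 - (j + 1) = (m - j) + 1 := by omega
    rw [e2, aaSeq, aaSeq, catalanC_succ, catalanC_succ]
    have e3 : j + 1 + (m - j + 1) = m + 2 := by omega
    rw [mul_mul_mul_comm, ← pow_add, e3]
  rw [Finset.sum_congr rfl this, ← Finset.mul_sum, aaSeq, catalanC_succ, hcat]

/-- The majorant function. -/
noncomputable def Afun (t : ℝ) : ℝ := ∑' n : ℕ, (aaSeq n : ℝ) * t ^ n

lemma summable_norm_aa {t : ℝ} (ht0 : 0 ≤ t) (ht : t < 1 / 8) :
    Summable fun n : ℕ => ‖(aaSeq n : ℝ) * t ^ n‖ := by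
  have h8 : (0:ℝ) ≤ 8 * t := by linarith
  have h8' : 8 * t < 1 := by linarith
  refine Summable.of_nonneg_of_le (fun n => norm_nonneg _) (fun n => ?_)
    (summable_geometric_of_lt_one h8 h8')
  have h1 : 0 ≤ (aaSeq n : ℝ) * t ^ n :=
    mul_nonneg (Nat.cast_nonneg _) (pow_nonneg ht0 n)
  rw [Real.norm_of_nonneg h1]
  calc (aaSeq n : ℝ) * t ^ n ≤ (8 ^ n : ℝ) * t ^ n := by
        apply mul_le_mul_of_nonneg_right _ (pow_nonneg ht0 n)
        exact_mod_cast aaSeq_le n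
    _ = (8 * t) ^ n := by rw [mul_pow]

lemma summable_aa {t : ℝ} (ht0 : 0 ≤ t) (ht : t < 1 / 8) :
    Summable fun n : ℕ => (aaSeq n : ℝ) * t ^ n :=
  (summable_norm_aa ht0 ht).of_norm

/-- The quadratic equation for the majorant function. -/
lemma Afun_quad {t : ℝ} (ht0 : 0 ≤ t) (ht : t < 1 / 8) :
    Afun t ^ 2 = Afun t - 2 * t := by
  have hs := summable_norm_aa ht0 ht
  have hsum := summable_aa ht0 ht
  have hprod := tsum_mul_tsum_eq_tsum_sum_antidiagonal_of_summable_norm hs hs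
  have hterm : ∀ n : ℕ, (∑ kl ∈ HasAntidiagonal.antidiagonal n,
      ((aaSeq kl.1 : ℝ) * t ^ kl.1) * ((aaSeq kl.2 : ℝ) * t ^ kl.2)) =
      (aaSeq n : ℝ) * t ^ n - (if n = 1 then 2 * t else 0) := by
    intro n
    have hfac : (∑ kl ∈ HasAntidiagonal.antidiagonal n,
        ((aaSeq kl.1 : ℝ) * t ^ kl.1) * ((aaSeq kl.2 : ℝ) * t ^ kl.2)) =
        (∑ kl ∈ HasAntidiagonal.antidiagonal n, (aaSeq kl.1 : ℝ) * (aaSeq kl.2 : ℝ)) * t ^ n := by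
      rw [Finset.sum_mul]
      apply Finset.sum_congr rfl
      intro kl hkl
      have : kl.1 + kl.2 = n := HasAntidiagonal.mem_antidiagonal.mp hkl
      rw [← this, pow_add]; ring
    rw [hfac]
    match n with
    | 0 => simp [aaSeq_zero]
    | 1 =>
      rw [Finset.Nat.sum_antidiagonal_eq_sum_range_succ_mk]
      simp [Finset.sum_range_succ, aaSeq_zero, aaSeq_one]
    | (m+2) =>
      have h2 : 2 ≤ m + 2 := by omega
      have hconv := aaSeq_conv (m + 2) h2
      have : (∑ kl ∈ HasAntidiagonal.antidiagonal (m + 2), (aaSeq kl.1 : ℝ) * (aaSeq kl.2 : ℝ)) =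
          ((aaSeq (m + 2) : ℝ)) := by
        rw [Finset.Nat.sum_antidiagonal_eq_sum_range_succ_mk]
        have hsub : Finset.Icc 1 (m + 2 - 1) ⊆ Finset.range (m + 2 + 1) := by
          intro i hi
          simp only [Finset.mem_Icc] at hi
          simp only [Finset.mem_range]
          omega
        rw [← Finset.sum_subset hsub]
        · rw [hconv]; push_cast; rfl
        · intro i hi hni
          simp only [Finset.mem_range] at hi
          simp only [Finset.mem_Icc] at hni
          have : i = 0 ∨ i = m + 2 := by omega
          rcases this with rfl | rfl
          · simp [aaSeq_zero]
          · simp [aaSeq_zero]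
      rw [this]
      simp
  rw [sq, Afun, hprod]
  have hsummand : Summable fun n : ℕ => (aaSeq n : ℝ) * t ^ n - (if n = 1 then 2 * t else 0) := by
    apply hsum.sub
    exact summable_of_finite_support (Set.Finite.subset (Set.finite_singleton 1)
      (fun n hn => by by_contra h; simp only [Set.mem_singleton_iff] at h;
                      simp [h] at hn))
  calc (∑' n : ℕ, ∑ kl ∈ HasAntidiagonal.antidiagonal n,
        ((aaSeq kl.1 : ℝ) * t ^ kl.1) * ((aaSeq kl.2 : ℝ) * t ^ kl.2))
      = ∑' n : ℕ, ((aaSeq n : ℝ) * t ^ n - (if n = 1 then 2 * t else 0)) :=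
        tsum_congr hterm
    _ = (∑' n : ℕ, (aaSeq n : ℝ) * t ^ n) - ∑' n : ℕ, (if n = 1 then 2 * t else 0) :=
        Summable.tsum_sub hsum (summable_of_finite_support (Set.Finite.subset (Set.finite_singleton 1)
          (fun n hn => by by_contra h; simp only [Set.mem_singleton_iff] at h;
                          simp [h] at hn)))
    _ = Afun t - 2 * t := by rw [tsum_ite_eq]; rfl

theorem genfun_F_quadratic (f : ℕ → ℤ) (hf0 : f 0 = 0) (hf1 : f 1 = 1)
    (hf : ∀ n : ℕ, 2 ≤ n →
      f n = ∑ i ∈ Finset.Icc 1 (n - 1),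
        ((2 : ℤ) ^ i * catalanC i - f i) * f (n - i))
    (x : ℝ) (hx0 : 0 ≤ x) (hx : x < 1 / 8) :
    ∃ F : ℝ, HasSum (fun n : ℕ => (f n : ℝ) * x ^ n) F ∧
      2 * F ^ 2 + F * (1 + Real.sqrt (1 - 8 * x)) - 2 * x = 0 := by
  -- bounds on f
  have hbounds : ∀ n : ℕ, 0 ≤ f n ∧ f n ≤ (aaSeq n : ℤ) := by
    intro n
    induction n using Nat.strong_induction_on with
    | _ n ih =>
      match n with
      | 0 => simp [hf0, aaSeq_zero]
      | 1 => simp [hf1, aaSeq_one]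
      | (m+2) =>
        have h2 : 2 ≤ m + 2 := by omega
        rw [hf (m+2) h2]
        have hmem : ∀ i ∈ Finset.Icc 1 (m + 2 - 1),
            0 ≤ ((2:ℤ)^i * catalanC i - f i) * f (m + 2 - i) ∧
            ((2:ℤ)^i * catalanC i - f i) * f (m + 2 - i) ≤
              (aaSeq i : ℤ) * (aaSeq (m + 2 - i) : ℤ) := by
          intro i hi
          simp only [Finset.mem_Icc] at hi
          have hi1 : i < m + 2 := by omega
          have hi2 : m + 2 - i < m + 2 := by omega
          obtain ⟨hfi0, hfia⟩ := ih i hi1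
          obtain ⟨hfj0, hfja⟩ := ih (m + 2 - i) hi2
          have hcast : ((2:ℤ)^i * catalanC i) = (aaSeq i : ℤ) := by
            rw [aaSeq]; push_cast; ring
          constructor
          · exact mul_nonneg (by rw [hcast]; linarith) hfj0
          · apply mul_le_mul _ hfja hfj0 (Int.natCast_nonneg _)
            rw [hcast]; linarith
        constructor
        · exact Finset.sum_nonneg fun i hi => (hmem i hi).1
        · calc (∑ i ∈ Finset.Icc 1 (m + 2 - 1),
              ((2:ℤ)^i * catalanC i - f i) * f (m + 2 - i))
              ≤ ∑ i ∈ Finset.Icc 1 (m + 2 - 1), (aaSeq i : ℤ) * (aaSeq (m + 2 - i) : ℤ) :=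
                Finset.sum_le_sum fun i hi => (hmem i hi).2
            _ = (aaSeq (m + 2) : ℤ) := by
                rw [aaSeq_conv (m + 2) h2]; push_cast; rfl
  -- summability of F
  have hFnorm : Summable fun n : ℕ => ‖(f n : ℝ) * x ^ n‖ := by
    refine Summable.of_nonneg_of_le (fun n => norm_nonneg _) (fun n => ?_)
      (summable_norm_aa hx0 hx)
    rw [norm_mul, Real.norm_of_nonneg (pow_nonneg hx0 n)]
    have h1 : 0 ≤ (aaSeq n : ℝ) * x ^ n :=
      mul_nonneg (Nat.cast_nonneg _) (pow_nonneg hx0 n)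
    rw [Real.norm_of_nonneg h1]
    apply mul_le_mul_of_nonneg_right _ (pow_nonneg hx0 n)
    rw [Real.norm_of_nonneg (by exact_mod_cast (hbounds n).1 : (0:ℝ) ≤ (f n : ℝ))]
    exact_mod_cast (hbounds n).2
  have hFsum : Summable fun n : ℕ => (f n : ℝ) * x ^ n := hFnorm.of_norm
  set F := ∑' n : ℕ, (f n : ℝ) * x ^ n with hFdef
  refine ⟨F, hFsum.hasSum, ?_⟩
  -- norm-summability of (a - f) x^n
  have hGFnorm : Summable fun n : ℕ => ‖((aaSeq n : ℝ) - (f n : ℝ)) * x ^ n‖ := by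
    refine Summable.of_nonneg_of_le (fun n => norm_nonneg _) (fun n => ?_)
      (summable_norm_aa hx0 hx)
    rw [norm_mul, Real.norm_of_nonneg (pow_nonneg hx0 n)]
    have h1 : 0 ≤ (aaSeq n : ℝ) * x ^ n :=
      mul_nonneg (Nat.cast_nonneg _) (pow_nonneg hx0 n)
    rw [Real.norm_of_nonneg h1]
    apply mul_le_mul_of_nonneg_right _ (pow_nonneg hx0 n)
    have h2 : (0:ℝ) ≤ (f n : ℝ) := by exact_mod_cast (hbounds n).1
    have h3 : (f n : ℝ) ≤ (aaSeq n : ℝ) := by exact_mod_cast (hbounds n).2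
    rw [Real.norm_of_nonneg (by linarith)]
    linarith
  -- Cauchy product giving the key identity
  have hkey : (Afun x - F) * F = F - x := by
    have hdiff : Afun x - F = ∑' n : ℕ, ((aaSeq n : ℝ) - (f n : ℝ)) * x ^ n := by
      rw [Afun, hFdef, ← Summable.tsum_sub (summable_aa hx0 hx) hFsum]
      apply tsum_congr; intro n; ring
    rw [hdiff]
    rw [tsum_mul_tsum_eq_tsum_sum_antidiagonal_of_summable_norm hGFnorm hFnorm]
    have hterm : ∀ n : ℕ, (∑ kl ∈ HasAntidiagonal.antidiagonal n,
        (((aaSeq kl.1 : ℝ) - (f kl.1 : ℝ)) * x ^ kl.1) * ((f kl.2 : ℝ) * x ^ kl.2)) =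
        (f n : ℝ) * x ^ n - (if n = 1 then x else 0) := by
      intro n
      have hfac : (∑ kl ∈ HasAntidiagonal.antidiagonal n,
          (((aaSeq kl.1 : ℝ) - (f kl.1 : ℝ)) * x ^ kl.1) * ((f kl.2 : ℝ) * x ^ kl.2)) =
          (∑ kl ∈ HasAntidiagonal.antidiagonal n,
            ((aaSeq kl.1 : ℝ) - (f kl.1 : ℝ)) * (f kl.2 : ℝ)) * x ^ n := by
        rw [Finset.sum_mul]
        apply Finset.sum_congr rfl
        intro kl hkl
        have : kl.1 + kl.2 = n := by simpa using (HasAntidiagonal.mem_antidiagonal.mp hkl)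
        rw [← this, pow_add]; ring
      rw [hfac]
      match n with
      | 0 => simp [aaSeq_zero, hf0]
      | 1 =>
        rw [Finset.Nat.sum_antidiagonal_eq_sum_range_succ_mk]
        simp [Finset.sum_range_succ, aaSeq_zero, aaSeq_one, hf0, hf1]
      | (m+2) =>
        have h2 : 2 ≤ m + 2 := by omega
        have : (∑ kl ∈ HasAntidiagonal.antidiagonal (m + 2),
            ((aaSeq kl.1 : ℝ) - (f kl.1 : ℝ)) * (f kl.2 : ℝ)) = (f (m+2) : ℝ) := by
          rw [Finset.Nat.sum_antidiagonal_eq_sum_range_succ_mk]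
          have hsub : Finset.Icc 1 (m + 2 - 1) ⊆ Finset.range (m + 2 + 1) := by
            intro i hi
            simp only [Finset.mem_Icc] at hi
            simp only [Finset.mem_range]
            omega
          rw [← Finset.sum_subset hsub]
          · rw [hf (m+2) h2]
            push_cast
            apply Finset.sum_congr rfl
            intro i _
            rw [aaSeq]
            push_cast
            ring
          · intro i hi hni
            simp only [Finset.mem_range] at hi
            simp only [Finset.mem_Icc] at hni
            have : i = 0 ∨ i = m + 2 := by omega
            rcases this with rfl | rfl
            · simp [aaSeq_zero, hf0]
            · simp [hf0]
        rw [this]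
        simp
    have hsumite : Summable fun n : ℕ => (if n = 1 then (x:ℝ) else 0) :=
      summable_of_finite_support (Set.Finite.subset (Set.finite_singleton 1)
        (fun n hn => by by_contra h; simp only [Set.mem_singleton_iff] at h;
                        simp [h] at hn))
    calc (∑' n : ℕ, ∑ kl ∈ HasAntidiagonal.antidiagonal n,
          (((aaSeq kl.1 : ℝ) - (f kl.1 : ℝ)) * x ^ kl.1) * ((f kl.2 : ℝ) * x ^ kl.2))
        = ∑' n : ℕ, ((f n : ℝ) * x ^ n - (if n = 1 then x else 0)) := tsum_congr hterm
      _ = (∑' n : ℕ, (f n : ℝ) * x ^ n) - ∑' n : ℕ, (if n = 1 then (x:ℝ) else 0) :=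
          Summable.tsum_sub hFsum hsumite
      _ = F - x := by rw [tsum_ite_eq]
  -- identify the square root
  set G := Afun x with hGdef
  have hGquad : G ^ 2 = G - 2 * x := Afun_quad hx0 hx
  have hcont : ContinuousOn Afun (Set.Icc 0 x) := by
    apply continuousOn_tsum (u := fun n => (aaSeq n : ℝ) * x ^ n)
    · intro n
      exact (continuous_const.mul (continuous_pow n)).continuousOn
    · exact summable_aa hx0 hx
    · intro n t ht
      simp only [Set.mem_Icc] at ht
      have h1 : 0 ≤ (aaSeq n : ℝ) * t ^ n :=
        mul_nonneg (Nat.cast_nonneg _) (pow_nonneg ht.1 n)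
      rw [Real.norm_of_nonneg h1]
      exact mul_le_mul_of_nonneg_left (pow_le_pow_left₀ ht.1 ht.2 n) (Nat.cast_nonneg _)
  have hA0 : Afun 0 = 0 := by
    rw [Afun]
    have : ∀ n : ℕ, (aaSeq n : ℝ) * (0:ℝ) ^ n = 0 := by
      intro n
      cases n with
      | zero => simp [aaSeq_zero]
      | succ m => simp
    rw [tsum_congr this, tsum_zero]
  have hne : ∀ t ∈ Set.Icc (0:ℝ) x, Afun t ≠ 1 / 2 := by
    intro t ht heq
    simp only [Set.mem_Icc] at ht
    have hquad := Afun_quad ht.1 (lt_of_le_of_lt ht.2 hx)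
    rw [heq] at hquad
    have : t = 1 / 8 := by nlinarith
    linarith [lt_of_le_of_lt ht.2 hx]
  have hGle : G ≤ 1 / 2 := by
    by_contra h
    push_neg at h
    have hmem : (1/2 : ℝ) ∈ Set.Icc (Afun 0) (Afun x) := by
      rw [hA0]
      exact ⟨by norm_num, le_of_lt h⟩
    have := intermediate_value_Icc hx0 hcont hmem
    obtain ⟨t, ht, heq⟩ := this
    exact hne t ht heq
  have hsqrt : Real.sqrt (1 - 8 * x) = 1 - 2 * G := by
    have h1 : 1 - 8 * x = (1 - 2 * G) ^ 2 := by nlinarith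
    rw [h1, Real.sqrt_sq (by linarith)]
  rw [hsqrt]
  linear_combination (-2 : ℝ) * hkey
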